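/- In a Naive Bayes model with two ternary features X_1, X_2 that are conditionally independent given a binary class C, i.e., P(c, x_1, x_2) = π_c θ^{(c)}_{x_1} ψ^{(c)}_{x_2}, suppose one feature parameter from each conditional distribution θ^{(c)} (c = 1,2) is varied and the rest covaried proportionally within each conditional distribution; then the resulting distribution P̃ satisfies D(Q||P) = D(Q||P̃) + D(P̃||P) for all model distributions Q agreeing with P̃ on the varied parameters and on π and ψ^{(c)}. -/

import Mathlib

/-- I-divergence (Kullback-Leibler divergence) on a finite set. -/
noncomputable def kl {Y : Type*} [Fintype Y] (Q P : Y → ℝ) : ℝ :=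
  ∑ y, Q y * Real.log (Q y / P y)

/-- Naive Bayes joint distribution: class prior π and conditional feature
distributions θ, ψ given the class. -/
noncomputable def naiveBayes (π : Fin 2 → ℝ) (θ ψ : Fin 2 → Fin 3 → ℝ) :
    Fin 2 × Fin 3 × Fin 3 → ℝ :=
  fun x => π x.1 * θ x.1 x.2.1 * ψ x.1 x.2.2

theorem stmt18 (π : Fin 2 → ℝ) (θ ψ : Fin 2 → Fin 3 → ℝ)
    (hπ : ∀ c, 0 < π c) (hπs : ∑ c, π c = 1)
    (hθ : ∀ c i, 0 < θ c i) (hθs : ∀ c, ∑ i, θ c i = 1)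
    (hψ : ∀ c i, 0 < ψ c i) (hψs : ∀ c, ∑ i, ψ c i = 1)
    -- one parameter from each conditional distribution θ^{(c)} is varied to t c
    (t : Fin 2 → ℝ) (ht0 : ∀ c, 0 < t c) (ht1 : ∀ c, t c < 1)
    (θt : Fin 2 → Fin 3 → ℝ)
    (hθt : θt = fun c i => if i = 0 then t c else θ c i * (1 - t c) / (1 - θ c 0)) :
    ∀ θb : Fin 2 → Fin 3 → ℝ,
      (∀ c i, 0 < θb c i) → (∀ c, ∑ i, θb c i = 1) → (∀ c, θb c 0 = t c) →
      kl (naiveBayes π θb ψ) (naiveBayes π θ ψ) =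
        kl (naiveBayes π θb ψ) (naiveBayes π θt ψ) +
          kl (naiveBayes π θt ψ) (naiveBayes π θ ψ) := by
  intro θb hθb hθbs hθbt
  have hθ01 : ∀ c, θ c 0 < 1 := by
    intro c
    have h := hθs c
    rw [Fin.sum_univ_three] at h
    nlinarith [hθ c 1, hθ c 2]
  have h1θ : ∀ c, (0:ℝ) < 1 - θ c 0 := fun c => by linarith [hθ01 c]
  have h1t : ∀ c, (0:ℝ) < 1 - t c := fun c => by linarith [ht1 c]
  have hθtpos : ∀ c i, 0 < θt c i := by
    intro c i
    rw [hθt]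
    dsimp only
    split
    · exact ht0 c
    · have h1 := hθ c i; have h2 := h1θ c; have h3 := h1t c; positivity
  have hθt0eq : ∀ c, θt c 0 = t c := by
    intro c; rw [hθt]; simp
  have hθt1eq : ∀ c, θt c 1 = θ c 1 * (1 - t c) / (1 - θ c 0) := by
    intro c; rw [hθt]; exact if_neg (by decide)
  have hθt2eq : ∀ c, θt c 2 = θ c 2 * (1 - t c) / (1 - θ c 0) := by
    intro c; rw [hθt]; exact if_neg (by decide)
  have hθtsum : ∀ c, θt c 1 + θt c 2 = 1 - t c := by
    intro c
    have h := hθs c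
    rw [Fin.sum_univ_three] at h
    rw [hθt1eq c, hθt2eq c, ← add_div, div_eq_iff (h1θ c).ne']
    linear_combination (1 - t c) * h
  have hθbsum : ∀ c, θb c 1 + θb c 2 = 1 - t c := by
    intro c
    have h := hθbs c
    rw [Fin.sum_univ_three] at h
    have := hθbt c
    linarith
  have hB : ∀ c, θb c 1 + θb c 2 = θt c 1 + θt c 2 := by
    intro c; rw [hθbsum c, hθtsum c]
  have hlog : ∀ c (i : Fin 3), i ≠ 0 →
      Real.log (θt c i) - Real.log (θ c i)
        = Real.log (1 - t c) - Real.log (1 - θ c 0) := by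
    intro c i hi
    rw [hθt]
    simp only [if_neg hi]
    rw [mul_div_assoc, Real.log_mul (hθ c i).ne' (div_pos (h1t c) (h1θ c)).ne',
      Real.log_div (h1t c).ne' (h1θ c).ne']
    ring
  have key : ∀ y : Fin 2 × Fin 3 × Fin 3,
      naiveBayes π θb ψ y * Real.log (naiveBayes π θb ψ y / naiveBayes π θ ψ y)
      - naiveBayes π θb ψ y * Real.log (naiveBayes π θb ψ y / naiveBayes π θt ψ y)
      - naiveBayes π θt ψ y * Real.log (naiveBayes π θt ψ y / naiveBayes π θ ψ y)
      = π y.1 * ψ y.1 y.2.2 * (θb y.1 y.2.1 - θt y.1 y.2.1)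
          * (Real.log (θt y.1 y.2.1) - Real.log (θ y.1 y.2.1)) := by
    rintro ⟨c, i, j⟩
    simp only [naiveBayes]
    have hq : (0:ℝ) < π c * θb c i * ψ c j :=
      mul_pos (mul_pos (hπ c) (hθb c i)) (hψ c j)
    have hp : (0:ℝ) < π c * θ c i * ψ c j :=
      mul_pos (mul_pos (hπ c) (hθ c i)) (hψ c j)
    have hpt : (0:ℝ) < π c * θt c i * ψ c j :=
      mul_pos (mul_pos (hπ c) (hθtpos c i)) (hψ c j)
    rw [Real.log_div hq.ne' hp.ne', Real.log_div hq.ne' hpt.ne',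
      Real.log_div hpt.ne' hp.ne',
      Real.log_mul (mul_pos (hπ c) (hθb c i)).ne' (hψ c j).ne',
      Real.log_mul (hπ c).ne' (hθb c i).ne',
      Real.log_mul (mul_pos (hπ c) (hθ c i)).ne' (hψ c j).ne',
      Real.log_mul (hπ c).ne' (hθ c i).ne',
      Real.log_mul (mul_pos (hπ c) (hθtpos c i)).ne' (hψ c j).ne',
      Real.log_mul (hπ c).ne' (hθtpos c i).ne']
    ring
  have main : kl (naiveBayes π θb ψ) (naiveBayes π θ ψ)
      - kl (naiveBayes π θb ψ) (naiveBayes π θt ψ)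
      - kl (naiveBayes π θt ψ) (naiveBayes π θ ψ) = 0 := by
    simp only [kl]
    rw [← Finset.sum_sub_distrib, ← Finset.sum_sub_distrib]
    rw [Finset.sum_congr rfl fun y _ => key y]
    simp only [Fintype.sum_prod_type, Fin.sum_univ_two, Fin.sum_univ_three]
    rw [hlog 0 1 (by decide), hlog 0 2 (by decide), hlog 1 1 (by decide),
      hlog 1 2 (by decide), hθt0eq 0, hθt0eq 1, hθbt 0, hθbt 1]
    linear_combination
      (π 0 * (Real.log (1 - t 0) - Real.log (1 - θ 0 0))
        * (ψ 0 0 + ψ 0 1 + ψ 0 2)) * hB 0 +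
      (π 1 * (Real.log (1 - t 1) - Real.log (1 - θ 1 0))
        * (ψ 1 0 + ψ 1 1 + ψ 1 2)) * hB 1
  linarith
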